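/- For every n ≥ 3, the cycle graph C_n on n vertices (the unlabeled Coxeter graph of the affine Coxeter group Ã_{n−1}) satisfies β(C_n) = f(n+1) + f(n−1) − 2, where f is the Fibonacci sequence (equivalently, β(C_n) is the n-th Lucas number minus 2). -/

import Mathlib

/-- One commutation move: swap two consecutive letters that are non-adjacent in `G`. -/
def CommStep {V : Type*} (G : SimpleGraph V) (w w' : List V) : Prop :=
  ∃ (a b : V) (u v : List V),
    ¬ G.Adj a b ∧ w = u ++ a :: b :: v ∧ w' = u ++ b :: a :: v

/-- Commutation equivalence of words: the equivalence relation generated by commutation moves. -/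
def commSetoid {V : Type*} (G : SimpleGraph V) : Setoid (List V) :=
  ⟨Relation.EqvGen (CommStep G), Relation.EqvGen.is_equivalence _⟩

/-- `bWords G k` = number of commutation classes of injective words of length `k` on `G`. -/
noncomputable def bWords {V : Type*} (G : SimpleGraph V) (k : ℕ) : ℕ :=
  Nat.card (Quotient (Setoid.comap
    (fun w : {w : List V // w.Nodup ∧ w.length = k} => w.1) (commSetoid G)))

/-- The boolean number `β(G) = (-1)^{|V|} ∑_{k=0}^{|V|} (-1)^k b_k(G)`. -/
noncomputable def booleanNumber {V : Type*} (G : SimpleGraph V) [Fintype V] : ℤ :=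
  (-1) ^ (Fintype.card V) *
    ∑ k ∈ Finset.range (Fintype.card V + 1), (-1) ^ k * (bWords G k : ℤ)

/-- The cycle graph on `n` vertices `0, 1, …, n-1`, with edges `{i, i+1 mod n}`. -/
def cycleG (n : ℕ) : SimpleGraph (Fin n) where
  Adj i j := i ≠ j ∧ ((i.1 + 1) % n = j.1 ∨ (j.1 + 1) % n = i.1)
  symm := ⟨by intro i j ⟨h1, h2⟩; exact ⟨h1.symm, h2.symm⟩⟩
  loopless := ⟨by intro i h; exact h.1 rfl⟩

open List Relation
open Fin.NatCast Fin.CommRing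

section BeforeLemmas
variable {α : Type*}

/-- `x` occurs (strictly) before `y` in the word `w`. -/
def Before (w : List α) (x y : α) : Prop := List.Sublist [x, y] w

instance {w : List α} {x y : α} [DecidableEq α] : Decidable (Before w x y) := by
  unfold Before; infer_instance

lemma Before.mem_left {w : List α} {x y : α} (h : Before w x y) : x ∈ w :=
  h.subset (by simp)

lemma Before.mem_right {w : List α} {x y : α} (h : Before w x y) : y ∈ w :=
  h.subset (by simp)

lemma before_total {w : List α} {x y : α} (hx : x ∈ w) (hy : y ∈ w) (hxy : x ≠ y) :
    Before w x y ∨ Before w y x := by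
  induction w with
  | nil => simp at hx
  | cons c t ih =>
    rcases eq_or_ne x c with rfl | hxc
    · left
      have hy' : y ∈ t := by
        rcases mem_cons.mp hy with rfl | h
        · exact absurd rfl hxy
        · exact h
      exact (cons_sublist_cons).mpr (singleton_sublist.mpr hy')
    · rcases eq_or_ne y c with rfl | hyc
      · right
        have hx' : x ∈ t := by
          rcases mem_cons.mp hx with rfl | h
          · exact absurd rfl hxc
          · exact h
        exact (cons_sublist_cons).mpr (singleton_sublist.mpr hx')
      · have hx' : x ∈ t := by rcases mem_cons.mp hx with rfl | h; exact absurd rfl hxc; exact h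
        have hy' : y ∈ t := by rcases mem_cons.mp hy with rfl | h; exact absurd rfl hyc; exact h
        rcases ih hx' hy' with h | h
        · exact Or.inl (h.cons c)
        · exact Or.inr (h.cons c)

lemma before_irrefl {w : List α} (hw : w.Nodup) (x : α) : ¬ Before w x x := by
  intro h
  have := List.Pairwise.sublist h hw
  simp at this

lemma before_asymm {w : List α} (hw : w.Nodup) {x y : α}
    (h1 : Before w x y) (h2 : Before w y x) : False := by
  rcases eq_or_ne x y with rfl | hxy
  · exact before_irrefl hw x h1
  · induction w with
    | nil => simp [Before] at h1
    | cons c t ih =>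
      have hnd : c ∉ t ∧ t.Nodup := by simpa using hw
      rcases sublist_cons_iff.mp h1 with h1' | ⟨r, hr, hr'⟩
      · rcases sublist_cons_iff.mp h2 with h2' | ⟨r2, hr2, hr2'⟩
        · exact ih hnd.2 h1' h2'
        · -- y = c
          have : y = c := by injection hr2
          subst this
          exact hnd.1 (h1'.subset (by simp))
      · -- x = c
        have hx : x = c := by injection hr
        have hrr : r = [y] := by injection hr with h1 h2; exact h2.symm
        subst hx; subst hrr
        rcases sublist_cons_iff.mp h2 with h2' | ⟨r2, hr2, hr2'⟩
        · exact hnd.1 (h2'.subset (by simp))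
        · have : y = x := by injection hr2
          exact hxy this.symm

lemma before_trans {w : List α} (hw : w.Nodup) {x y z : α}
    (h1 : Before w x y) (h2 : Before w y z) : Before w x z := by
  induction w with
  | nil => simp [Before] at h1
  | cons c t ih =>
    have hnd : c ∉ t ∧ t.Nodup := by simpa using hw
    rcases sublist_cons_iff.mp h1 with h1' | ⟨r, hr, hr'⟩
    · -- [x,y] <+ t, so y ∈ t, y ≠ c
      have hy : y ∈ t := h1'.subset (by simp)
      have hyc : y ≠ c := fun h => hnd.1 (h ▸ hy)
      rcases sublist_cons_iff.mp h2 with h2' | ⟨r2, hr2, hr2'⟩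
      · exact (ih hnd.2 h1' h2').cons c
      · exact absurd (by injection hr2) hyc
    · -- x = c, r = [y]
      have hx : x = c := by injection hr
      have hrr : r = [y] := by injection hr with h1 h2; exact h2.symm
      subst hx; subst hrr
      -- need z ∈ t
      have hy : y ∈ t := hr'.subset (by simp)
      have hyc : y ≠ x := fun h => hnd.1 (h ▸ hy)
      have hz : z ∈ t := by
        rcases sublist_cons_iff.mp h2 with h2' | ⟨r2, hr2, hr2'⟩
        · exact h2'.subset (by simp)
        · exact absurd (by injection hr2) hyc
      exact (cons_sublist_cons).mpr (singleton_sublist.mpr hz)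

end BeforeLemmas


section Swap
variable {α : Type*}

/-- Core swap lemma: one commutation move preserves `Before x y` unless `{x,y} = {a,b}`. -/
lemma before_swap {u v : List α} {a b x y : α}
    (hab : ¬(x = a ∧ y = b)) (hba : ¬(x = b ∧ y = a))
    (h : Before (u ++ a :: b :: v) x y) : Before (u ++ b :: a :: v) x y := by
  rcases sublist_append_iff.mp h with ⟨l₁, l₂, hl, h₁, h₂⟩
  rcases l₁ with _ | ⟨p, _ | ⟨q, l⟩⟩
  · -- l₁ = [], l₂ = [x,y] <+ a :: b :: v
    simp only [List.nil_append] at hl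
    subst hl
    rcases sublist_cons_iff.mp h₂ with h₂' | ⟨r, hr, hr'⟩
    · -- [x,y] <+ b :: v
      rcases sublist_cons_iff.mp h₂' with h₂'' | ⟨r, hr, hr'⟩
      · -- [x,y] <+ v
        refine Sublist.trans ?_ (List.sublist_append_right u _)
        exact (h₂''.cons a).cons b
      · -- x = b, [y] <+ v
        obtain ⟨rfl, hry⟩ : x = b ∧ r = [y] := by
          refine ⟨by injection hr, ?_⟩
          injection hr with e1 e2; exact e2.symm
        subst hry
        refine Sublist.trans ?_ (List.sublist_append_right u _)
        exact (cons_sublist_cons).mpr ((hr'.cons a))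
    · -- x = a, [y] <+ b :: v
      obtain ⟨rfl, hry⟩ : x = a ∧ r = [y] := by
        refine ⟨by injection hr, ?_⟩
        injection hr with e1 e2; exact e2.symm
      subst hry
      rcases sublist_cons_iff.mp hr' with h'' | ⟨r2, hr2, hr2'⟩
      · -- y ∈ v
        refine Sublist.trans ?_ (List.sublist_append_right u _)
        exact ((cons_sublist_cons.mpr h'').cons b : [x, y] <+ b :: x :: v)
      · -- y = b: excluded
        have : y = b := by injection hr2
        exact absurd ⟨rfl, this⟩ hab
  · -- l₁ = [x], l₂ = [y]
    simp only [List.cons_append, List.nil_append] at hl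
    obtain ⟨rfl, rfl⟩ : p = x ∧ l₂ = [y] := by
      injection hl with e1 e2; exact ⟨e1.symm, e2.symm⟩
    have hy : y ∈ a :: b :: v := h₂.subset (by simp)
    have hy' : y ∈ b :: a :: v := by
      rcases mem_cons.mp hy with rfl | h
      · exact mem_cons_of_mem _ (mem_cons_self)
      · rcases mem_cons.mp h with rfl | h
        · exact mem_cons_self
        · exact mem_cons_of_mem _ (mem_cons_of_mem _ h)
    exact Sublist.append h₁ (singleton_sublist.mpr hy')
  · -- l₁ = [x,y] <+ u
    simp only [List.cons_append] at hl
    injection hl with e1 hl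
    injection hl with e2 hl
    obtain ⟨rfl, rfl⟩ := List.append_eq_nil_iff.mp hl.symm
    subst e1; subst e2
    exact h₁.trans (List.sublist_append_left u _)

lemma commStep_perm {V : Type*} {G : SimpleGraph V} {w w' : List V}
    (h : CommStep G w w') : w.Perm w' := by
  obtain ⟨a, b, u, v, _, rfl, rfl⟩ := h
  exact List.Perm.append_left u (List.Perm.swap b a v)

lemma commStep_before {V : Type*} {G : SimpleGraph V} {w w' : List V}
    (h : CommStep G w w') {x y : V} (hadj : G.Adj x y) :
    (Before w x y ↔ Before w' x y) := by
  obtain ⟨a, b, u, v, hnadj, rfl, rfl⟩ := h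
  have hab : ¬(x = a ∧ y = b) := by rintro ⟨rfl, rfl⟩; exact hnadj hadj
  have hba : ¬(x = b ∧ y = a) := by rintro ⟨rfl, rfl⟩; exact hnadj hadj.symm
  constructor
  · exact before_swap hab hba
  · exact before_swap hba hab

/-- Invariance of support and of the order of adjacent pairs under commutation equivalence. -/
lemma eqvGen_invar {V : Type*} {G : SimpleGraph V} {w w' : List V}
    (h : Relation.EqvGen (CommStep G) w w') :
    w.Perm w' ∧ ∀ x y, G.Adj x y → (Before w x y ↔ Before w' x y) := by
  induction h with
  | rel a b hab => exact ⟨commStep_perm hab, fun x y hxy => commStep_before hab hxy⟩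
  | refl a => exact ⟨List.Perm.refl a, fun _ _ _ => Iff.rfl⟩
  | symm a b _ ih => exact ⟨ih.1.symm, fun x y hxy => (ih.2 x y hxy).symm⟩
  | trans a b c _ _ ih1 ih2 =>
      exact ⟨ih1.1.trans ih2.1, fun x y hxy => (ih1.2 x y hxy).trans (ih2.2 x y hxy)⟩

lemma eqvGen_cons {V : Type*} {G : SimpleGraph V} {s t : List V} (c : V)
    (h : Relation.EqvGen (CommStep G) s t) :
    Relation.EqvGen (CommStep G) (c :: s) (c :: t) := by
  induction h with
  | rel a b hab =>
      obtain ⟨x, y, u, v, hn, rfl, rfl⟩ := hab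
      exact Relation.EqvGen.rel _ _ ⟨x, y, c :: u, v, hn, rfl, rfl⟩
  | refl a => exact Relation.EqvGen.refl _
  | symm a b _ ih => exact Relation.EqvGen.symm _ _ ih
  | trans a b d _ _ ih1 ih2 => exact Relation.EqvGen.trans _ _ _ ih1 ih2

lemma commute_front {V : Type*} {G : SimpleGraph V} {a : V} (v : List V) :
    ∀ u : List V, (∀ x ∈ u, ¬ G.Adj x a) →
    Relation.EqvGen (CommStep G) (u ++ a :: v) (a :: (u ++ v)) := by
  intro u
  induction u with
  | nil => intro _; exact Relation.EqvGen.refl _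
  | cons c u ih =>
      intro hu
      have h1 : Relation.EqvGen (CommStep G) (c :: (u ++ a :: v)) (c :: (a :: (u ++ v))) :=
        eqvGen_cons c (ih (fun x hx => hu x (mem_cons_of_mem _ hx)))
      have h2 : CommStep G (c :: a :: (u ++ v)) (a :: c :: (u ++ v)) :=
        ⟨c, a, [], u ++ v, hu c (mem_cons_self), rfl, rfl⟩
      exact Relation.EqvGen.trans _ _ _ h1 (Relation.EqvGen.rel _ _ h2)

lemma before_cons_iff {α : Type*} {t : List α} {c x y : α} (hx : x ≠ c) :
    Before (c :: t) x y ↔ Before t x y := by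
  constructor
  · intro h
    rcases sublist_cons_iff.mp h with h' | ⟨r, hr, _⟩
    · exact h'
    · exact absurd (by injection hr) hx
  · exact fun h => h.cons c

/-- Completeness: equal invariants imply commutation equivalence. -/
lemma complete {V : Type*} [DecidableEq V] {G : SimpleGraph V} :
    ∀ (w' w : List V), w.Nodup → w'.Nodup → w.toFinset = w'.toFinset →
    (∀ x y, G.Adj x y → (Before w x y ↔ Before w' x y)) →
    Relation.EqvGen (CommStep G) w w' := by
  intro w'
  induction w' with
  | nil =>
      intro w hw _ hfin _
      simp only [List.toFinset_nil, List.toFinset_eq_empty_iff] at hfin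
      subst hfin; exact Relation.EqvGen.refl _
  | cons a t' ih =>
      intro w hw hw' hfin hbef
      have haw : a ∈ w := by
        rw [← List.mem_toFinset, hfin]; simp
      obtain ⟨u, v, rfl⟩ := List.append_of_mem haw
      have hnd2 : (a :: (u ++ v)).Nodup := List.nodup_middle.mp hw
      have hna : a ∉ u ++ v := (List.nodup_cons.mp hnd2).1
      have hnduv : (u ++ v).Nodup := (List.nodup_cons.mp hnd2).2
      have hnat' : a ∉ t' := (List.nodup_cons.mp hw').1
      have hndt' : t'.Nodup := (List.nodup_cons.mp hw').2
      -- every element of u is non-adjacent to a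
      have hu : ∀ x ∈ u, ¬ G.Adj x a := by
        intro x hxu hadj
        have hxa : x ≠ a := fun h => hna (h ▸ List.mem_append_left v hxu)
        have h1 : Before (u ++ a :: v) x a :=
          Sublist.append (singleton_sublist.mpr hxu) (singleton_sublist.mpr (mem_cons_self))
        have h2 : Before (a :: t') x a := (hbef x a hadj).mp h1
        rcases sublist_cons_iff.mp h2 with h' | ⟨r, hr, _⟩
        · exact hnat' (h'.subset (by simp))
        · exact hxa (by injection hr)
      have e1 : Relation.EqvGen (CommStep G) (u ++ a :: v) (a :: (u ++ v)) :=
        commute_front v u hu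
      -- transfer the invariants along e1
      have inv1 := eqvGen_invar e1
      have hfin1 : (a :: (u ++ v)).toFinset = (a :: t').toFinset := by
        rw [← hfin]; exact (List.toFinset_eq_of_perm _ _ inv1.1).symm
      have hfin2 : (u ++ v).toFinset = t'.toFinset := by
        have h1 : insert a (u ++ v).toFinset = insert a t'.toFinset := by
          simpa using hfin1
        have e2 : (u ++ v).toFinset = (insert a (u ++ v).toFinset).erase a := by
          rw [Finset.erase_insert (by simpa using hna)]
        rw [e2, h1, Finset.erase_insert (by simpa using hnat')]
      have hbef2 : ∀ x y, G.Adj x y → (Before (u ++ v) x y ↔ Before t' x y) := by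
        intro x y hadj
        have H : Before (a :: (u ++ v)) x y ↔ Before (a :: t') x y :=
          ((inv1.2 x y hadj).symm).trans (hbef x y hadj)
        rcases eq_or_ne x a with rfl | hxa
        · constructor
          · intro h; exact absurd h.mem_left hna
          · intro h; exact absurd h.mem_left hnat'
        · rw [before_cons_iff hxa, before_cons_iff hxa] at H
          exact H
      have e2 := ih (u ++ v) hnduv hndt' hfin2 hbef2
      exact Relation.EqvGen.trans _ _ _ e1
        (eqvGen_cons a e2)

end Swap

section Acyclic
variable {n : ℕ} [NeZero n]

lemma two_step_ne (hn : 3 ≤ n) (x : Fin n) (h : x + 1 + 1 = x) : False := by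
  haveI : NeZero n := ⟨by omega⟩
  have h3 : ((2 : ℕ) : Fin n) = 0 := by
    push_cast
    linear_combination h
  have h4 : n ∣ 2 := (Fin.natCast_eq_zero).mp h3
  have := Nat.le_of_dvd (by norm_num) h4
  omega

lemma one_step_ne (hn : 3 ≤ n) (x : Fin n) (h : x + 1 = x) : False := by
  haveI : NeZero n := ⟨by omega⟩
  have h3 : ((1 : ℕ) : Fin n) = 0 := by
    push_cast
    linear_combination h
  have h4 : n ∣ 1 := (Fin.natCast_eq_zero).mp h3
  have := Nat.le_of_dvd (by norm_num) h4
  omega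

lemma chain_fwd_last {D : Fin n → Fin n → Prop} :
    ∀ (L : List (Fin n)) (x : Fin n), List.Chain (fun a b => D a b ∧ b = a + 1) x L →
      List.getLast (x :: L) (List.cons_ne_nil _ _) = x + (L.length : Fin n) := by
  intro L
  induction L with
  | nil => intro x _; simp
  | cons z L ih =>
      intro x hch
      rcases List.chain_cons.mp hch with ⟨⟨_, hz⟩, hch'⟩
      have : List.getLast (x :: z :: L) (List.cons_ne_nil _ _)
          = List.getLast (z :: L) (List.cons_ne_nil _ _) := List.getLast_cons _
      rw [this, ih z hch', hz]
      have : ((L.length + 1 : ℕ) : Fin n) = (L.length : Fin n) + 1 := by push_cast; ring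
      simp only [List.length_cons, this]
      ring

lemma chain_bwd_last {D : Fin n → Fin n → Prop} :
    ∀ (L : List (Fin n)) (x : Fin n), List.Chain (fun a b => D a b ∧ a = b + 1) x L →
      List.getLast (x :: L) (List.cons_ne_nil _ _) = x - (L.length : Fin n) := by
  intro L
  induction L with
  | nil => intro x _; simp
  | cons z L ih =>
      intro x hch
      rcases List.chain_cons.mp hch with ⟨⟨_, hz⟩, hch'⟩
      have hzx : z = x - 1 := by rw [hz]; ring
      have : List.getLast (x :: z :: L) (List.cons_ne_nil _ _)
          = List.getLast (z :: L) (List.cons_ne_nil _ _) := List.getLast_cons _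
      rw [this, ih z hch', hzx]
      have : ((L.length + 1 : ℕ) : Fin n) = (L.length : Fin n) + 1 := by push_cast; ring
      simp only [List.length_cons, this]
      ring

lemma chain_fwd_cover {D : Fin n → Fin n → Prop} :
    ∀ (L : List (Fin n)) (x : Fin n), List.Chain (fun a b => D a b ∧ b = a + 1) x L →
      ∀ i : ℕ, i < L.length → D (x + (i : Fin n)) (x + (i : Fin n) + 1) := by
  intro L
  induction L with
  | nil => intro x _ i hi; simp at hi
  | cons z L ih =>
      intro x hch i hi
      rcases List.chain_cons.mp hch with ⟨⟨hD, hz⟩, hch'⟩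
      cases i with
      | zero => simpa [← hz] using hD
      | succ i =>
          have := ih z hch' i (by simpa using hi)
          rw [hz] at this
          have harith : x + 1 + (i : Fin n) = x + ((i + 1 : ℕ) : Fin n) := by push_cast; ring
          rwa [harith] at this

lemma chain_bwd_cover {D : Fin n → Fin n → Prop} :
    ∀ (L : List (Fin n)) (x : Fin n), List.Chain (fun a b => D a b ∧ a = b + 1) x L →
      ∀ i : ℕ, i < L.length → D (x - (i : Fin n)) (x - (i : Fin n) - 1) := by
  intro L
  induction L with
  | nil => intro x _ i hi; simp at hi
  | cons z L ih =>
      intro x hch i hi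
      rcases List.chain_cons.mp hch with ⟨⟨hD, hz⟩, hch'⟩
      have hzx : z = x - 1 := by rw [hz]; ring
      cases i with
      | zero =>
          have g1 : x - ((0 : ℕ) : Fin n) = x := by push_cast; ring
          have g2 : x - ((0 : ℕ) : Fin n) - 1 = z := by rw [hzx]; push_cast; ring
          rw [g2, g1]; exact hD
      | succ i =>
          have := ih z hch' i (by simpa using hi)
          rw [hzx] at this
          have harith : x - 1 - (i : Fin n) = x - ((i + 1 : ℕ) : Fin n) := by push_cast; ring
          rwa [harith] at this

lemma chain_dichotomy (hn : 3 ≤ n) {D : Fin n → Fin n → Prop}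
    (hD : ∀ x y, D x y → y = x + 1 ∨ x = y + 1)
    (hcons : ∀ x, ¬ (D x (x + 1) ∧ D (x + 1) x)) :
    ∀ (L : List (Fin n)) (x : Fin n), List.Chain D x L →
      List.Chain (fun a b => D a b ∧ b = a + 1) x L ∨
      List.Chain (fun a b => D a b ∧ a = b + 1) x L := by
  intro L
  induction L with
  | nil => intro x _; left; exact List.Chain.nil
  | cons z L ih =>
      intro x hch
      rcases List.chain_cons.mp hch with ⟨hxz, hch'⟩
      rcases ih z hch' with hf | hb
      · rcases hD x z hxz with hz | hz
        · left; exact List.chain_cons.mpr ⟨⟨hxz, hz⟩, hf⟩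
        · -- x = z + 1, i.e. backward first step
          cases L with
          | nil => right; exact List.chain_cons.mpr ⟨⟨hxz, hz⟩, List.Chain.nil⟩
          | cons z' L' =>
              rcases List.chain_cons.mp hf with ⟨⟨hD', hz'⟩, _⟩
              -- D z z' with z' = z + 1, and D x z with x = z + 1, so z' = x
              exfalso
              have d1 : D z (z + 1) := by rw [← hz']; exact hD'
              have d2 : D (z + 1) z := by rw [← hz]; exact hxz
              exact hcons z ⟨d1, d2⟩
      · rcases hD x z hxz with hz | hzb
        · -- forward first step, backward later
          cases L with
          | nil => left; exact List.chain_cons.mpr ⟨⟨hxz, hz⟩, List.Chain.nil⟩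
          | cons z' L' =>
              rcases List.chain_cons.mp hb with ⟨⟨hD', hz'⟩, _⟩
              -- z = z' + 1 and z = x + 1 so z' = x; D z z' = D (x+1) x, D x z = D x (x+1)
              exfalso
              have hz'x : z' = x := by
                have h5 : z' + 1 = x + 1 := by rw [← hz', ← hz]
                exact add_right_cancel h5
              have d1 : D x (x + 1) := by rw [← hz]; exact hxz
              have d2 : D (x + 1) x := by rw [← hz, ← hz'x]; exact hD'
              exact hcons x ⟨d1, d2⟩
        · right; exact List.chain_cons.mpr ⟨⟨hxz, hzb⟩, hb⟩
      -- done
  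
lemma no_cycle (hn : 3 ≤ n) {D : Fin n → Fin n → Prop}
    (hD : ∀ x y, D x y → y = x + 1 ∨ x = y + 1)
    (hcons : ∀ x, ¬ (D x (x + 1) ∧ D (x + 1) x))
    (hf : ¬ ∀ x, D x (x + 1)) (hb : ¬ ∀ x, D (x + 1) x) :
    ∀ x, ¬ Relation.TransGen D x x := by
  haveI : NeZero n := ⟨by omega⟩
  intro x hx
  obtain ⟨y, hxy, hyx⟩ := (Relation.TransGen.head'_iff).mp hx
  obtain ⟨l, hl, hlast⟩ := List.exists_isChain_cons_of_relationReflTransGen hyx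
  set L : List (Fin n) := y :: l with hL
  have hch : List.Chain D x L := List.chain_cons.mpr ⟨hxy, hl⟩
  have hlast' : List.getLast (x :: L) (List.cons_ne_nil _ _) = x := by
    rw [List.getLast_cons (by simp [hL])]
    exact hlast
  have hlen : 0 < L.length := by simp [hL]
  rcases chain_dichotomy hn hD hcons L x hch with hfc | hbc
  · have h1 := chain_fwd_last L x hfc
    rw [hlast'] at h1
    have h0 : ((L.length : ℕ) : Fin n) = 0 := by linear_combination -h1
    have hdvd : n ∣ L.length := by
      rwa [Fin.natCast_eq_zero] at h0
    have hnle : n ≤ L.length := Nat.le_of_dvd hlen hdvd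
    apply hf
    intro z
    have hk : ((z - x : Fin n)).val < L.length := lt_of_lt_of_le (Fin.is_lt _) hnle
    have := chain_fwd_cover L x hfc ((z - x : Fin n)).val hk
    rw [Fin.cast_val_eq_self] at this
    have hzz : x + (z - x) = z := by ring
    rwa [hzz] at this
  · have h1 := chain_bwd_last L x hbc
    rw [hlast'] at h1
    have h0 : ((L.length : ℕ) : Fin n) = 0 := by linear_combination h1
    have hdvd : n ∣ L.length := by rwa [Fin.natCast_eq_zero] at h0
    have hnle : n ≤ L.length := Nat.le_of_dvd hlen hdvd
    apply hb
    intro z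
    have hk : ((x - (z + 1) : Fin n)).val < L.length := lt_of_lt_of_le (Fin.is_lt _) hnle
    have := chain_bwd_cover L x hbc ((x - (z + 1) : Fin n)).val hk
    rw [Fin.cast_val_eq_self] at this
    have e1 : x - (x - (z + 1)) = z + 1 := by ring
    have e2 : x - (x - (z + 1)) - 1 = z := by ring
    rwa [e2, e1] at this

end Acyclic


section Cycle
variable {n : ℕ}

lemma val_add_one [NeZero n] (hn : 3 ≤ n) (i : Fin n) :
    ((i + 1 : Fin n) : ℕ) = (i.1 + 1) % n := by
  rw [Fin.add_def, Fin.val_one']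
  rw [Nat.mod_eq_of_lt (show 1 < n by omega)]

lemma adj_iff [NeZero n] (hn : 3 ≤ n) {i j : Fin n} :
    (cycleG n).Adj i j ↔ (j = i + 1 ∨ i = j + 1) := by
  show (i ≠ j ∧ ((i.1 + 1) % n = j.1 ∨ (j.1 + 1) % n = i.1)) ↔ _
  constructor
  · rintro ⟨hne, h | h⟩
    · left; apply Fin.ext; rw [val_add_one hn, h]
    · right; apply Fin.ext; rw [val_add_one hn, h]
  · rintro (rfl | rfl)
    · constructor
      · intro h; exact one_step_ne hn i h.symm
      · left; rw [val_add_one hn]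
    · constructor
      · intro h; exact one_step_ne hn j h
      · right; rw [val_add_one hn]

/-- The complete invariant of a word: its support together with the orientation of each
cycle edge whose endpoints both occur. -/
def code [NeZero n] (w : List (Fin n)) : Finset (Fin n) × (Fin n → Bool) :=
  (w.toFinset, fun i => decide (Before w i (i + 1)))

/-- The target data: subsets of size `k` with an orientation of the induced edges,
excluding the two cyclic orientations when all vertices are present. -/
def Tpred (n k : ℕ) [NeZero n] (p : Finset (Fin n) × (Fin n → Bool)) : Prop :=
  p.1.card = k ∧ (∀ i, p.2 i = true → i ∈ p.1 ∧ i + 1 ∈ p.1) ∧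
    (p.1 = Finset.univ → (¬ ∀ i, p.2 i = true) ∧ (¬ ∀ i, p.2 i = false))

instance {k : ℕ} [NeZero n] : DecidablePred (Tpred n k) := by
  unfold Tpred; infer_instance

lemma before_cycle_fwd [NeZero n] (hn : 3 ≤ n) {w : List (Fin n)} (hw : w.Nodup)
    (h : ∀ i : Fin n, Before w i (i + 1)) : False := by
  have key : ∀ k : ℕ, Before w 0 (0 + ((k + 1 : ℕ) : Fin n)) := by
    intro k
    induction k with
    | zero => simpa using h 0
    | succ k ih =>
        have h2 := h (0 + ((k + 1 : ℕ) : Fin n))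
        have := before_trans hw ih h2
        have e : (0 : Fin n) + ((k + 1 : ℕ) : Fin n) + 1 = 0 + ((k + 1 + 1 : ℕ) : Fin n) := by
          push_cast; ring
        rwa [e] at this
  have := key (n - 1)
  have e : ((n - 1 + 1 : ℕ) : Fin n) = 0 := by
    rw [show n - 1 + 1 = n by omega]; exact Fin.natCast_self n
  rw [e, add_zero] at this
  exact before_irrefl hw 0 this

lemma before_cycle_bwd [NeZero n] (hn : 3 ≤ n) {w : List (Fin n)} (hw : w.Nodup)
    (h : ∀ i : Fin n, Before w (i + 1) i) : False := by
  have key : ∀ k : ℕ, Before w 0 (0 - ((k + 1 : ℕ) : Fin n)) := by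
    intro k
    induction k with
    | zero =>
        have := h (0 - 1)
        have e : (0 : Fin n) - 1 + 1 = 0 := by ring
        rw [e] at this
        simpa using this
    | succ k ih =>
        have h2 := h (0 - ((k + 1 + 1 : ℕ) : Fin n))
        have e : (0 : Fin n) - ((k + 1 + 1 : ℕ) : Fin n) + 1 = 0 - ((k + 1 : ℕ) : Fin n) := by
          push_cast; ring
        rw [e] at h2
        exact before_trans hw ih h2
  have := key (n - 1)
  have e : ((n - 1 + 1 : ℕ) : Fin n) = 0 := by
    rw [show n - 1 + 1 = n by omega]; exact Fin.natCast_self n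
  rw [e, sub_zero] at this
  exact before_irrefl hw 0 this

/-- The code of a nodup word of length `k` satisfies `Tpred`. -/
lemma code_mem [NeZero n] (hn : 3 ≤ n) {w : List (Fin n)} (hw : w.Nodup) {k : ℕ}
    (hk : w.length = k) : Tpred n k (code w) := by
  refine ⟨?_, ?_, ?_⟩
  · rw [show (code w).1 = w.toFinset from rfl, List.toFinset_card_of_nodup hw, hk]
  · intro i hi
    simp only [code, decide_eq_true_eq] at hi
    exact ⟨List.mem_toFinset.mpr hi.mem_left, List.mem_toFinset.mpr hi.mem_right⟩
  · intro huniv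
    constructor
    · intro hall
      apply before_cycle_fwd hn hw
      intro i
      simpa [code] using hall i
    · intro hall
      apply before_cycle_bwd hn hw
      intro i
      have h1 : ¬ Before w i (i + 1) := by simpa [code] using hall i
      have hmem : ∀ j : Fin n, j ∈ w := by
        intro j
        rw [← List.mem_toFinset]
        show j ∈ (code w).1
        rw [huniv]; exact Finset.mem_univ j
      rcases before_total (hmem (i+1)) (hmem i) (fun h => one_step_ne hn i h) with h | h
      · exact h
      · exact absurd h h1

lemma before_sorted {α : Type*} {w : List α} (hnd : w.Nodup) {s : α → α → Prop}
    (htot : ∀ a b, a ≠ b → s a b ∨ s b a) (hanti : ∀ a b, s a b → s b a → a = b)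
    (hsort : w.Pairwise s) {x y : α} :
    Before w x y ↔ (x ∈ w ∧ y ∈ w ∧ x ≠ y ∧ s x y) := by
  constructor
  · intro h
    have hxy : x ≠ y := by
      rintro rfl; exact before_irrefl hnd x h
    have hp := List.Pairwise.sublist h hsort
    have hsxy : s x y := (List.pairwise_cons.mp hp).1 y (by simp)
    exact ⟨h.mem_left, h.mem_right, hxy, hsxy⟩
  · rintro ⟨hx, hy, hxy, hs⟩
    rcases before_total hx hy hxy with h | h
    · exact h
    · -- y before x: contradiction with s x y by antisymmetry
      have hp := List.Pairwise.sublist h hsort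
      have hsyx : s y x := (List.pairwise_cons.mp hp).1 x (by simp)
      exact absurd (hanti x y hs hsyx) hxy

/-- Realizability: every admissible pair `(S, o)` is the code of a nodup word. -/
lemma exists_word [NeZero n] (hn : 3 ≤ n) (S : Finset (Fin n)) (o : Fin n → Bool)
    (hsupp : ∀ i, o i = true → i ∈ S ∧ i + 1 ∈ S)
    (huniv : S = Finset.univ → (¬ ∀ i, o i = true) ∧ (¬ ∀ i, o i = false)) :
    ∃ w : List (Fin n), w.Nodup ∧ w.toFinset = S ∧
      (fun i => decide (Before w i (i + 1))) = o := by
  classical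
  -- the orientation relation
  set D : Fin n → Fin n → Prop := fun x y =>
    (y = x + 1 ∧ x ∈ S ∧ y ∈ S ∧ o x = true) ∨
    (x = y + 1 ∧ x ∈ S ∧ y ∈ S ∧ o y = false) with hD_def
  have hD : ∀ x y, D x y → y = x + 1 ∨ x = y + 1 := by
    rintro x y (⟨h, _⟩ | ⟨h, _⟩); exacts [Or.inl h, Or.inr h]
  have hcons : ∀ x, ¬ (D x (x + 1) ∧ D (x + 1) x) := by
    rintro x ⟨h1, h2⟩
    have ho1 : o x = true := by
      rcases h1 with ⟨_, _, _, h⟩ | ⟨h, _⟩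
      · exact h
      · exact (two_step_ne hn x h.symm).elim
    rcases h2 with ⟨h, _⟩ | ⟨_, _, _, h⟩
    · exact two_step_ne hn x h.symm
    · rw [ho1] at h; simp at h
  have hf : ¬ ∀ x, D x (x + 1) := by
    intro hall
    have hmem : ∀ x : Fin n, x ∈ S ∧ o x = true := by
      intro x
      rcases hall x with ⟨_, hx, _, ho⟩ | ⟨h, _⟩
      · exact ⟨hx, ho⟩
      · exact (two_step_ne hn x h.symm).elim
    have hSu : S = Finset.univ := Finset.eq_univ_iff_forall.mpr (fun x => (hmem x).1)
    exact (huniv hSu).1 (fun i => (hmem i).2)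
  have hb : ¬ ∀ x, D (x + 1) x := by
    intro hall
    have hmem : ∀ x : Fin n, x ∈ S ∧ o x = false := by
      intro x
      rcases hall x with ⟨h, _⟩ | ⟨_, _, hx, ho⟩
      · exact (two_step_ne hn x h.symm).elim
      · exact ⟨hx, ho⟩
    have hSu : S = Finset.univ := Finset.eq_univ_iff_forall.mpr (fun x => (hmem x).1)
    exact (huniv hSu).2 (fun i => (hmem i).2)
  have hacyc := no_cycle hn hD hcons hf hb
  -- extend to a linear order
  set r : Fin n → Fin n → Prop := Relation.ReflTransGen D with hr_def
  haveI hpo : IsPartialOrder (Fin n) r :=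
    { refl := fun a => Relation.ReflTransGen.refl
      trans := fun a b c hab hbc => Relation.ReflTransGen.trans hab hbc
      antisymm := by
        intro a b hab hba
        rcases Relation.reflTransGen_iff_eq_or_transGen.mp hab with rfl | h1
        · rfl
        · rcases Relation.reflTransGen_iff_eq_or_transGen.mp hba with rfl | h2
          · rfl
          · exact absurd (h1.trans h2) (hacyc a) }
  obtain ⟨s, hlin, hrs⟩ := extend_partialOrder r
  haveI : Std.Total s := hlin.2
  haveI : IsTrans (Fin n) s := hlin.1.1.2
  haveI : Std.Antisymm s := hlin.1.2
  haveI : DecidableRel s := Classical.decRel s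
  refine ⟨Finset.sort S s, Finset.sort_nodup S s, Finset.sort_toFinset S s, ?_⟩
  set w := Finset.sort S s with hw_def
  have hnd : w.Nodup := Finset.sort_nodup S s
  have hsort : w.Pairwise s := Finset.pairwise_sort S s
  have hmemw : ∀ x, x ∈ w ↔ x ∈ S := fun x => Finset.mem_sort s
  have htot : ∀ a b : Fin n, a ≠ b → s a b ∨ s b a := fun a b _ => Std.Total.total a b
  have hanti : ∀ a b : Fin n, s a b → s b a → a = b := fun a b => Std.Antisymm.antisymm a b
  funext i
  rcases ho : o i with _ | _
  · -- o i = false : show ¬ Before w i (i+1)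
    simp only [decide_eq_false_iff_not]
    intro hbef
    rw [before_sorted hnd htot hanti hsort] at hbef
    obtain ⟨hiw, hi1w, hne, hs1⟩ := hbef
    have hiS : i ∈ S := (hmemw i).mp hiw
    have hi1S : i + 1 ∈ S := (hmemw (i+1)).mp hi1w
    have hDba : D (i + 1) i := Or.inr ⟨rfl, hi1S, hiS, ho⟩
    have hs2 : s (i + 1) i := hrs _ _ (Relation.ReflTransGen.single hDba)
    exact hne (hanti i (i+1) hs1 hs2)
  · -- o i = true : show Before w i (i+1)
    simp only [decide_eq_true_eq]
    obtain ⟨hiS, hi1S⟩ := hsupp i ho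
    have hDab : D i (i + 1) := Or.inl ⟨rfl, hiS, hi1S, ho⟩
    have hs1 : s i (i + 1) := hrs _ _ (Relation.ReflTransGen.single hDab)
    rw [before_sorted hnd htot hanti hsort]
    exact ⟨(hmemw i).mpr hiS, (hmemw (i+1)).mpr hi1S,
      fun h => one_step_ne hn i h.symm, hs1⟩

end Cycle



lemma before_rev_iff {α : Type*} {w : List α} (hnd : w.Nodup) {x y : α} (hxy : x ≠ y) :
    Before w y x ↔ (x ∈ w ∧ y ∈ w ∧ ¬ Before w x y) := by
  constructor
  · intro h
    exact ⟨h.mem_right, h.mem_left, fun h2 => before_asymm hnd h2 h⟩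
  · rintro ⟨hx, hy, hnb⟩
    rcases before_total hy hx hxy.symm with h | h
    · exact h
    · exact absurd h hnb

section Count
variable {n : ℕ}

lemma bWords_eq_card [NeZero n] (hn : 3 ≤ n) (k : ℕ) :
    bWords (cycleG n) k = Fintype.card {p : Finset (Fin n) × (Fin n → Bool) // Tpred n k p} := by
  classical
  rw [bWords, ← Nat.card_eq_fintype_card]
  set st := Setoid.comap
    (fun w : {w : List (Fin n) // w.Nodup ∧ w.length = k} => w.1) (commSetoid (cycleG n)) with hst
  have hrel : ∀ a b : {w : List (Fin n) // w.Nodup ∧ w.length = k},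
      st.r a b ↔ Relation.EqvGen (CommStep (cycleG n)) a.1 b.1 := fun a b => Iff.rfl
  have hresp : ∀ a b : {w : List (Fin n) // w.Nodup ∧ w.length = k}, st.r a b →
      (⟨code a.1, code_mem hn a.2.1 a.2.2⟩ : {p // Tpred n k p}) =
      ⟨code b.1, code_mem hn b.2.1 b.2.2⟩ := by
    intro a b hab
    rw [hrel] at hab
    obtain ⟨hperm, hbef⟩ := eqvGen_invar hab
    apply Subtype.ext
    apply Prod.ext
    · exact List.toFinset_eq_of_perm _ _ hperm
    · funext i
      have hadj : (cycleG n).Adj i (i + 1) := (adj_iff hn).mpr (Or.inl rfl)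
      exact decide_eq_decide.mpr (hbef i (i+1) hadj)
  set F : Quotient st → {p // Tpred n k p} :=
    Quotient.lift (fun w : {w : List (Fin n) // w.Nodup ∧ w.length = k} =>
      (⟨code w.1, code_mem hn w.2.1 w.2.2⟩ : {p // Tpred n k p})) hresp with hF
  apply Nat.card_eq_of_bijective F
  constructor
  · -- injective
    intro q1 q2
    induction q1 using Quotient.ind with | _ a =>
    induction q2 using Quotient.ind with | _ b =>
    intro heq
    have hcode : code a.1 = code b.1 := by
      have := congrArg Subtype.val heq
      simpa [hF] using this
    apply Quotient.sound
    show st.r a b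
    rw [hrel]
    apply complete
    · exact a.2.1
    · exact b.2.1
    · exact congrArg Prod.fst hcode
    · intro x y hadj
      rcases (adj_iff hn).mp hadj with rfl | rfl
      · exact decide_eq_decide.mp (congrFun (congrArg Prod.snd hcode) x)
      · -- here x = y + 1
        have h1 : Before a.1 y (y + 1) ↔ Before b.1 y (y + 1) :=
          decide_eq_decide.mp (congrFun (congrArg Prod.snd hcode) y)
        have hfineq : a.1.toFinset = b.1.toFinset := congrArg Prod.fst hcode
        have hmem : ∀ z : Fin n, z ∈ a.1 ↔ z ∈ b.1 := fun z => by
          rw [← List.mem_toFinset, ← List.mem_toFinset, hfineq]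
        have hne : y ≠ y + 1 := fun h => one_step_ne hn y h.symm
        rw [before_rev_iff a.2.1 hne, before_rev_iff b.2.1 hne, hmem, hmem, h1]
  · -- surjective
    rintro ⟨⟨S, o⟩, hT⟩
    obtain ⟨hcard, hsupp, huniv⟩ := hT
    obtain ⟨w, hnd, hfin, ho⟩ := exists_word hn S o
      (fun i hi => by simpa using hsupp i hi) (fun h => huniv h)
    have hlen : w.length = k := by
      rw [← List.toFinset_card_of_nodup hnd, hfin]
      exact hcard
    refine ⟨Quotient.mk st ⟨w, hnd, hlen⟩, ?_⟩
    simp only [hF, Quotient.lift_mk]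
    apply Subtype.ext
    apply Prod.ext
    · exact hfin
    · exact ho

end Count

section CardCount
variable {n : ℕ}

def edgeCount [NeZero n] (S : Finset (Fin n)) : ℕ :=
  (Finset.univ.filter (fun i : Fin n => i ∈ S ∧ i + 1 ∈ S)).card

def Ocond [NeZero n] (S : Finset (Fin n)) (o : Fin n → Bool) : Prop :=
  (∀ i, o i = true → i ∈ S ∧ i + 1 ∈ S) ∧
    (S = Finset.univ → (¬ ∀ i, o i = true) ∧ (¬ ∀ i, o i = false))

instance [NeZero n] (S : Finset (Fin n)) : DecidablePred (Ocond S) := by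
  unfold Ocond; infer_instance

def NN [NeZero n] (S : Finset (Fin n)) : ℕ :=
  if S = Finset.univ then 2 ^ n - 2 else 2 ^ edgeCount S

lemma card_Ocond_ne_univ [NeZero n] (S : Finset (Fin n)) (hS : S ≠ Finset.univ) :
    Fintype.card {o : Fin n → Bool // Ocond S o} = 2 ^ edgeCount S := by
  classical
  have e1 : {o : Fin n → Bool // Ocond S o} ≃
      {o : Fin n → Bool // ∀ i, o i = true → i ∈ S ∧ i + 1 ∈ S} :=
    { toFun := fun o => ⟨o.1, o.2.1⟩
      invFun := fun o => ⟨o.1, o.2, fun h => absurd h hS⟩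
      left_inv := fun o => rfl
      right_inv := fun o => rfl }
  have e2 : {o : Fin n → Bool // ∀ i, o i = true → i ∈ S ∧ i + 1 ∈ S} ≃
      ({i : Fin n // i ∈ S ∧ i + 1 ∈ S} → Bool) :=
    { toFun := fun o j => o.1 j.1
      invFun := fun g => ⟨fun i => if h : i ∈ S ∧ i + 1 ∈ S then g ⟨i, h⟩ else false,
        fun i hi => by
          by_cases h : i ∈ S ∧ i + 1 ∈ S
          · exact h
          · simp only [] at hi; rw [dif_neg h] at hi; exact absurd hi Bool.false_ne_true⟩
      left_inv := fun o => by
        apply Subtype.ext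
        funext i
        by_cases h : i ∈ S ∧ i + 1 ∈ S
        · simp [dif_pos h]
        · simp only [dif_neg h]
          cases hoi : o.1 i with
          | false => rfl
          | true => exact absurd (o.2 i hoi) h
      right_inv := fun g => by
        funext j
        simp [dif_pos j.2] }
  rw [Fintype.card_congr (e1.trans e2), Fintype.card_fun, Fintype.card_bool]
  congr 1
  rw [Fintype.card_subtype]
  rfl

lemma card_Ocond_univ [NeZero n] (hn : 3 ≤ n) :
    Fintype.card {o : Fin n → Bool // Ocond (Finset.univ : Finset (Fin n)) o} = 2 ^ n - 2 := by
  classical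
  rw [Fintype.card_subtype]
  have hfil : Finset.univ.filter (fun o : Fin n → Bool => Ocond Finset.univ o) =
      Finset.univ \ {(fun _ => true : Fin n → Bool), (fun _ => false : Fin n → Bool)} := by
    ext o
    simp only [Finset.mem_filter, Finset.mem_univ, true_and, Finset.mem_sdiff,
      Finset.mem_insert, Finset.mem_singleton]
    constructor
    · intro h
      rintro (rfl | rfl)
      · exact (h.2 rfl).1 (fun i => rfl)
      · exact (h.2 rfl).2 (fun i => rfl)
    · intro h
      constructor
      · intro i _; exact ⟨Finset.mem_univ i, Finset.mem_univ _⟩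
      · intro _
        constructor
        · intro hall
          exact h (Or.inl (funext fun i => hall i))
        · intro hall
          exact h (Or.inr (funext fun i => hall i))
  rw [hfil, Finset.card_sdiff_of_subset (by intro x _; exact Finset.mem_univ x)]
  have hne : (fun _ => true : Fin n → Bool) ≠ (fun _ => false) := by
    intro h
    have := congrFun h ⟨0, by omega⟩
    simp at this
  rw [Finset.card_insert_of_notMem (by simpa using hne), Finset.card_singleton]
  congr 1
  rw [Finset.card_univ, Fintype.card_fun, Fintype.card_bool, Fintype.card_fin]

lemma card_T [NeZero n] (hn : 3 ≤ n) (k : ℕ) :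
    Fintype.card {p : Finset (Fin n) × (Fin n → Bool) // Tpred n k p} =
      ∑ S ∈ Finset.univ.filter (fun S : Finset (Fin n) => S.card = k), NN S := by
  classical
  have e : {p : Finset (Fin n) × (Fin n → Bool) // Tpred n k p} ≃
      Σ S : {S : Finset (Fin n) // S.card = k}, {o : Fin n → Bool // Ocond S.1 o} :=
    { toFun := fun p => ⟨⟨p.1.1, p.2.1⟩, ⟨p.1.2, p.2.2.1, p.2.2.2⟩⟩
      invFun := fun q => ⟨(q.1.1, q.2.1), q.1.2, q.2.2.1, q.2.2.2⟩
      left_inv := fun p => rfl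
      right_inv := fun q => rfl }
  rw [Fintype.card_congr e, Fintype.card_sigma]
  have hNN : ∀ S : {S : Finset (Fin n) // S.card = k},
      Fintype.card {o : Fin n → Bool // Ocond S.1 o} = NN S.1 := by
    intro S
    by_cases hS : S.1 = Finset.univ
    · rw [hS, card_Ocond_univ hn, NN, if_pos rfl]
    · rw [card_Ocond_ne_univ S.1 hS, NN, if_neg hS]
  rw [Finset.sum_congr rfl (fun S _ => hNN S)]
  exact (Finset.sum_subtype _ (fun S => by simp) NN).symm

lemma edgeCount_univ [NeZero n] : edgeCount (Finset.univ : Finset (Fin n)) = n := by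
  rw [edgeCount]
  rw [Finset.filter_true_of_mem (fun i _ => ⟨Finset.mem_univ i, Finset.mem_univ _⟩)]
  rw [Finset.card_univ, Fintype.card_fin]

lemma sum_alt [NeZero n] (hn : 3 ≤ n) :
    ∑ k ∈ Finset.range (n + 1), (-1 : ℤ) ^ k * (bWords (cycleG n) k : ℤ) =
      (∑ S : Finset (Fin n), (-1 : ℤ) ^ S.card * 2 ^ edgeCount S) - 2 * (-1 : ℤ) ^ n := by
  classical
  have h1 : ∀ k, (bWords (cycleG n) k : ℤ) =
      ∑ S ∈ Finset.univ.filter (fun S : Finset (Fin n) => S.card = k), (NN S : ℤ) := by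
    intro k
    rw [bWords_eq_card hn k, card_T hn k]
    push_cast
    rfl
  calc ∑ k ∈ Finset.range (n + 1), (-1 : ℤ) ^ k * (bWords (cycleG n) k : ℤ)
      = ∑ k ∈ Finset.range (n + 1),
          ∑ S ∈ Finset.univ.filter (fun S : Finset (Fin n) => S.card = k),
            (-1 : ℤ) ^ S.card * (NN S : ℤ) := by
        refine Finset.sum_congr rfl (fun k _ => ?_)
        rw [h1, Finset.mul_sum]
        refine Finset.sum_congr rfl (fun S hS => ?_)
        rw [(Finset.mem_filter.mp hS).2]
    _ = ∑ S : Finset (Fin n), (-1 : ℤ) ^ S.card * (NN S : ℤ) := by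
        apply Finset.sum_fiberwise_of_maps_to
        intro S _
        rw [Finset.mem_range]
        have : S.card ≤ n := by simpa using Finset.card_le_univ S
        omega
    _ = (∑ S : Finset (Fin n), (-1 : ℤ) ^ S.card * 2 ^ edgeCount S) - 2 * (-1 : ℤ) ^ n := by
        have hpt : ∀ S : Finset (Fin n), (-1 : ℤ) ^ S.card * (NN S : ℤ) =
            (-1 : ℤ) ^ S.card * 2 ^ edgeCount S - (if S = Finset.univ then 2 * (-1:ℤ)^n else 0) := by
          intro S
          by_cases hS : S = Finset.univ
          · subst hS
            rw [NN, if_pos rfl, if_pos rfl, edgeCount_univ]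
            have h2n : (2:ℕ) ≤ 2 ^ n := by
              calc (2:ℕ) = 2^1 := by norm_num
              _ ≤ 2^n := Nat.pow_le_pow_right (by norm_num) (by omega)
            rw [Nat.cast_sub h2n]
            have hcard : (Finset.univ : Finset (Fin n)).card = n := by
              rw [Finset.card_univ, Fintype.card_fin]
            rw [hcard]
            push_cast
            ring
          · rw [NN, if_neg hS, if_neg hS]
            push_cast
            ring
        rw [Finset.sum_congr rfl (fun S _ => hpt S), Finset.sum_sub_distrib]
        congr 1
        rw [Finset.sum_ite_eq' Finset.univ (Finset.univ : Finset (Fin n))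
          (fun _ => 2 * (-1:ℤ)^n)]
        simp

end CardCount

section Transfer

/-- Transfer weight: vertex sign `-1` for a present vertex, factor `2` for a present edge. -/
def w2 (p q : Bool) : ℤ := (if p then (-1) else 1) * (if p && q then 2 else 1)

/-- Powers of the transfer matrix. -/
def PP : ℕ → Bool → Bool → ℤ
  | 0, a, b => if a = b then 1 else 0
  | (m+1), a, b => ∑ c : Bool, w2 a c * PP m c b

lemma PP_rec : ∀ (m : ℕ) (a b : Bool), PP (m+2) a b = PP m a b - PP (m+1) a b := by
  intro m
  induction m with
  | zero => decide
  | succ m ih =>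
      intro a b
      show ∑ c : Bool, w2 a c * PP (m+2) c b = PP (m+1) a b - PP (m+2) a b
      have : ∀ c, w2 a c * PP (m+2) c b = w2 a c * PP m c b - w2 a c * PP (m+1) c b := by
        intro c; rw [ih c b]; ring
      rw [Finset.sum_congr rfl (fun c _ => this c), Finset.sum_sub_distrib]
      rfl

def tFib (m : ℕ) : ℤ := PP m true true + PP m false false

lemma tFib_rec (m : ℕ) : tFib (m+2) = tFib m - tFib (m+1) := by
  unfold tFib
  rw [PP_rec m true true, PP_rec m false false]
  ring

lemma tFib_closed : ∀ m : ℕ,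
    tFib (m+1) = (-1 : ℤ)^(m+1) * ((Nat.fib (m+2) : ℤ) + (Nat.fib m : ℤ)) := by
  intro m
  induction m using Nat.twoStepInduction with
  | zero => unfold tFib; decide
  | one => unfold tFib; decide
  | more m ih1 ih2 =>
      have h := tFib_rec (m+1)
      rw [show m + 1 + 2 = m + 2 + 1 from rfl] at h
      rw [h, ih1, ih2]
      rw [show m + 2 + 2 = (m + 2) + 2 from rfl, Nat.fib_add_two (n := m + 2),
        Nat.fib_add_two (n := m)]
      push_cast
      ring

/-- Path weights. -/
def pw : Bool → List Bool → Bool → ℤ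
  | a, [], b => w2 a b
  | a, c :: l, b => w2 a c * pw c l b

lemma sum_pw : ∀ (m : ℕ) (a b : Bool),
    ∑ g : Fin m → Bool, pw a (List.ofFn g) b = PP (m+1) a b := by
  intro m
  induction m with
  | zero =>
      intro a b
      rw [Fintype.sum_unique]
      show pw a (List.ofFn _) b = _
      rw [List.ofFn_zero]
      show w2 a b = ∑ c : Bool, w2 a c * PP 0 c b
      rw [Fintype.sum_bool]
      show w2 a b = w2 a true * (if true = b then 1 else 0) +
        w2 a false * (if false = b then 1 else 0)
      cases b <;> simp
  | succ m ih =>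
      intro a b
      rw [← Equiv.sum_comp (Fin.consEquiv (fun _ => Bool))
        (fun g => pw a (List.ofFn g) b)]
      have key : ∀ p : Bool × (Fin m → Bool),
          pw a (List.ofFn ((Fin.consEquiv (fun _ => Bool)) p)) b
            = w2 a p.1 * pw p.1 (List.ofFn p.2) b := by
        rintro ⟨c, h⟩
        have e1 : List.ofFn ((Fin.consEquiv (fun _ => Bool)) (c, h)) =
            c :: List.ofFn h := by
          rw [List.ofFn_succ]
          congr 1
        rw [e1]
        rfl
      rw [Finset.sum_congr rfl (fun p _ => key p), Fintype.sum_prod_type]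
      show ∑ c : Bool, ∑ h : Fin m → Bool, w2 a c * pw c (List.ofFn h) b = _
      have : ∀ c : Bool, ∑ h : Fin m → Bool, w2 a c * pw c (List.ofFn h) b
          = w2 a c * PP (m+1) c b := by
        intro c
        rw [← Finset.mul_sum, ih c b]
      rw [Finset.sum_congr rfl (fun c _ => this c)]
      rfl

lemma path_prod : ∀ (m : ℕ) (g : Fin (m+1) → Bool) (b : Bool),
    (∏ i : Fin m, w2 (g i.castSucc) (g i.succ)) * w2 (g (Fin.last m)) b
      = pw (g 0) (List.ofFn (fun j : Fin m => g j.succ)) b := by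
  intro m
  induction m with
  | zero =>
      intro g b
      simp only [Finset.univ_eq_empty, Finset.prod_empty, one_mul, List.ofFn_zero]
      rfl
  | succ m ih =>
      intro g b
      have e1 : List.ofFn (fun j : Fin (m+1) => g j.succ)
          = g (Fin.succ 0) :: List.ofFn (fun j : Fin m => g j.succ.succ) := by
        rw [List.ofFn_succ]
      rw [e1]
      show _ = w2 (g 0) (g (Fin.succ 0)) * pw (g (Fin.succ 0))
        (List.ofFn (fun j : Fin m => g j.succ.succ)) b
      have ih' := ih (fun i => g i.succ) b
      simp only [Fin.succ_last] at ih'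
      rw [← ih']
      rw [Fin.prod_univ_succ (fun i : Fin (m+1) => w2 (g i.castSucc) (g i.succ))]
      have e2 : ∀ i : Fin m, w2 (g i.succ.castSucc) (g i.succ.succ)
          = w2 (g i.castSucc.succ) (g i.succ.succ) := by
        intro i; rw [Fin.succ_castSucc]
      rw [Finset.prod_congr rfl (fun i _ => e2 i)]
      have e3 : (0 : Fin (m+1)).castSucc = (0 : Fin (m+2)) := rfl
      rw [e3]
      ring

lemma cyc_prod (m : ℕ) (g : Fin (m+1) → Bool) :
    ∏ i : Fin (m+1), w2 (g i) (g (i+1))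
      = pw (g 0) (List.ofFn (fun j : Fin m => g j.succ)) (g 0) := by
  rw [Fin.prod_univ_castSucc (fun i : Fin (m+1) => w2 (g i) (g (i+1)))]
  have e1 : ∀ i : Fin m, w2 (g i.castSucc) (g (i.castSucc + 1))
      = w2 (g i.castSucc) (g i.succ) := by
    intro i; rw [Fin.coeSucc_eq_succ]
  have e2 : Fin.last m + 1 = 0 := Fin.last_add_one m
  rw [Finset.prod_congr rfl (fun i _ => e1 i), e2]
  exact path_prod m g (g 0)

lemma sum_cyc (m : ℕ) :
    ∑ g : Fin (m+1) → Bool, ∏ i : Fin (m+1), w2 (g i) (g (i+1)) = tFib (m+1) := by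
  rw [Finset.sum_congr rfl (fun g _ => cyc_prod m g)]
  rw [← Equiv.sum_comp (Fin.consEquiv (fun _ => Bool))
    (fun g : Fin (m+1) → Bool => pw (g 0) (List.ofFn (fun j : Fin m => g j.succ)) (g 0))]
  have key : ∀ p : Bool × (Fin m → Bool),
      (fun g : Fin (m+1) → Bool => pw (g 0) (List.ofFn (fun j : Fin m => g j.succ)) (g 0))
        ((Fin.consEquiv (fun _ => Bool)) p) = pw p.1 (List.ofFn p.2) p.1 := by
    rintro ⟨c, h⟩
    simp only [Fin.consEquiv_apply, Fin.cons_zero, Fin.cons_succ]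
  rw [Finset.sum_congr rfl (fun p _ => key p), Fintype.sum_prod_type]
  have : ∀ c : Bool, ∑ h : Fin m → Bool, pw c (List.ofFn h) c = PP (m+1) c c :=
    fun c => sum_pw m c c
  rw [Finset.sum_congr rfl (fun c _ => this c), Fintype.sum_bool]
  rfl

end Transfer

section Bridge
variable {n : ℕ}

lemma w2_decide (Pp Qq : Prop) [Decidable Pp] [Decidable Qq] :
    w2 (decide Pp) (decide Qq) =
      (if Pp then (-1 : ℤ) else 1) * (if Pp ∧ Qq then 2 else 1) := by
  by_cases hp : Pp <;> by_cases hq : Qq <;> simp [w2, hp, hq]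

lemma weight_S [NeZero n] (S : Finset (Fin n)) :
    (-1 : ℤ)^S.card * 2^(edgeCount S)
      = ∏ i : Fin n, w2 (decide (i ∈ S)) (decide (i + 1 ∈ S)) := by
  classical
  have e : ∀ i : Fin n, w2 (decide (i ∈ S)) (decide (i + 1 ∈ S))
      = (if i ∈ S then (-1 : ℤ) else 1) * (if i ∈ S ∧ i + 1 ∈ S then 2 else 1) :=
    fun i => w2_decide _ _
  rw [Finset.prod_congr rfl (fun i _ => e i), Finset.prod_mul_distrib]
  congr 1
  · rw [Finset.prod_ite, Finset.prod_const, Finset.prod_const, one_pow, mul_one]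
    congr 1
    rw [Finset.filter_mem_eq_inter, Finset.univ_inter]
  · rw [Finset.prod_ite, Finset.prod_const, Finset.prod_const, one_pow, mul_one]
    rfl

def finsetBoolEquiv [NeZero n] : Finset (Fin n) ≃ (Fin n → Bool) :=
  { toFun := fun S i => decide (i ∈ S)
    invFun := fun g => Finset.univ.filter (fun i => g i = true)
    left_inv := fun S => by ext i; simp
    right_inv := fun g => by funext i; cases h : g i <;> simp [h] }

lemma sum_S [NeZero n] (hn : 3 ≤ n) :
    ∑ S : Finset (Fin n), (-1 : ℤ)^S.card * 2^(edgeCount S) = tFib n := by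
  classical
  rw [Finset.sum_congr rfl (fun S _ => weight_S S)]
  obtain ⟨m, rfl⟩ : ∃ m, n = m + 1 := ⟨n - 1, by omega⟩
  calc ∑ S : Finset (Fin (m+1)), ∏ i, w2 (decide (i ∈ S)) (decide (i + 1 ∈ S))
      = ∑ g : Fin (m+1) → Bool, ∏ i, w2 (g i) (g (i + 1)) :=
        Equiv.sum_comp (finsetBoolEquiv (n := m+1))
          (fun g : Fin (m+1) → Bool => ∏ i, w2 (g i) (g (i + 1)))
    _ = tFib (m+1) := sum_cyc m

end Bridge

/-- **Boolean number of a cycle.**  For `n ≥ 3`, the cycle graph `C_n` (the unlabeled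
Coxeter graph of the affine Coxeter group `Ã_{n-1}`) satisfies
`β(C_n) = f(n+1) + f(n-1) - 2`, i.e. the `n`-th Lucas number minus `2`. -/
theorem booleanNumber_cycleGraph (n : ℕ) (hn : 3 ≤ n) :
    booleanNumber (cycleG n) = (Nat.fib (n + 1) : ℤ) + (Nat.fib (n - 1) : ℤ) - 2 := by
  haveI : NeZero n := ⟨by omega⟩
  rw [booleanNumber, Fintype.card_fin, sum_alt hn, sum_S hn]
  obtain ⟨m, rfl⟩ : ∃ m, n = m + 1 := ⟨n - 1, by omega⟩
  rw [tFib_closed m, show m + 1 - 1 = m from rfl]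
  have key : (-1 : ℤ)^(m+1) * (-1 : ℤ)^(m+1) = 1 := by
    rw [← mul_pow]; norm_num
  linear_combination ((Nat.fib (m+2) : ℤ) + (Nat.fib m : ℤ) - 2) * key
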